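/- Let $n=2m$ with $m\ge 1$, let $\sigma>0$, let $0<\tau<\pi$, let $z\in\mathbb{R}^n$, and let $S$ be a real skew-symmetric $n\times n$ matrix with $S^2=-(\sigma\tau)^2 I_n$. With $g(\tau)=\tau\cot\tau$, the $(n+1)\times(n+1)$ block matrix $\begin{pmatrix} 2\sigma g(\tau) I_n - 2S & 2\,(\tau g'(\tau)-g(\tau))\,z \\ 2\,(g(\tau)-\tau g'(\tau))\,z^{\mathsf T} & -|z|^2\,\sigma^{-1}\tau^2 g''(\tau) \end{pmatrix}$ has determinant $2^{\,n+1}\,|z|^2\,\sigma^{\,n-1}\,\big(\tfrac{\tau}{\sin\tau}\big)^{n+2}$. -/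

import Mathlib

open Matrix Polynomial

private lemma deriv_g_eq' {τ : ℝ} (hs : Real.sin τ ≠ 0) :
    deriv (fun t => t * (Real.cos t / Real.sin t)) τ
      = Real.cos τ / Real.sin τ - τ / (Real.sin τ)^2 := by
  have h : HasDerivAt (fun t => t * (Real.cos t / Real.sin t))
      (1 * (Real.cos τ / Real.sin τ) + τ *
        ((-Real.sin τ * Real.sin τ - Real.cos τ * Real.cos τ) / (Real.sin τ)^2)) τ :=
    (hasDerivAt_id τ).mul ((Real.hasDerivAt_cos τ).div (Real.hasDerivAt_sin τ) hs)
  rw [h.deriv]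
  have h2 : -Real.sin τ * Real.sin τ - Real.cos τ * Real.cos τ = -1 := by
    have := Real.sin_sq_add_cos_sq τ; nlinarith
  rw [h2]; field_simp; ring

private lemma deriv2_g_eq' {τ : ℝ} (hτ : 0 < τ) (hτπ : τ < Real.pi) :
    deriv (deriv (fun t => t * (Real.cos t / Real.sin t))) τ
      = -2 / (Real.sin τ)^2 + 2 * τ * Real.cos τ / (Real.sin τ)^3 := by
  have hsopen : IsOpen {t : ℝ | Real.sin t ≠ 0} :=
    isOpen_ne.preimage Real.continuous_sin
  have hsτ : Real.sin τ ≠ 0 := ne_of_gt (Real.sin_pos_of_pos_of_lt_pi hτ hτπ)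
  have hev : deriv (fun t => t * (Real.cos t / Real.sin t))
      =ᶠ[nhds τ] (fun t => Real.cos t / Real.sin t - t / (Real.sin t)^2) := by
    filter_upwards [hsopen.mem_nhds hsτ] with t ht
    exact deriv_g_eq' ht
  rw [hev.deriv_eq]
  have h1 : HasDerivAt (fun t => Real.cos t / Real.sin t)
      ((-Real.sin τ * Real.sin τ - Real.cos τ * Real.cos τ) / (Real.sin τ)^2) τ :=
    (Real.hasDerivAt_cos τ).div (Real.hasDerivAt_sin τ) hsτ
  have h2 : HasDerivAt (fun t => t / (Real.sin t)^2)
      ((1 * (Real.sin τ)^2 - τ * (2 * Real.sin τ ^ (2-1) * Real.cos τ)) / ((Real.sin τ)^2)^2) τ :=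
    (hasDerivAt_id τ).div ((Real.hasDerivAt_sin τ).pow 2) (pow_ne_zero 2 hsτ)
  rw [show (fun t => Real.cos t / Real.sin t - t / Real.sin t ^ 2) = (fun t => Real.cos t / Real.sin t) - (fun t => t / Real.sin t ^ 2) from rfl, (h1.sub h2).deriv]
  have hc : -Real.sin τ * Real.sin τ - Real.cos τ * Real.cos τ = -1 := by
    have := Real.sin_sq_add_cos_sq τ; nlinarith
  rw [hc]; field_simp; ring

private lemma det_skew_shift' {n m : ℕ} (hn : n = 2 * m) (T : Matrix (Fin n) (Fin n) ℝ)
    (hT : Tᵀ = -T) (c : ℝ) (hT2 : T * T = (-c) • (1 : Matrix (Fin n) (Fin n) ℝ))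
    (a : ℝ) : (a • (1 : Matrix (Fin n) (Fin n) ℝ) - T).det = (a ^ 2 + c) ^ m := by
  set Tc : Matrix (Fin n) (Fin n) ℝ[X] := T.map C with hTc
  have hchar : charmatrix T = (X : ℝ[X]) • (1 : Matrix (Fin n) (Fin n) ℝ[X]) - Tc := by
    ext i j
    by_cases h : i = j
    · subst h; simp [charmatrix_apply_eq, hTc]
    · simp [charmatrix_apply_ne _ _ _ h, Matrix.one_apply_ne h, hTc]
  have hPmon : (T.charpoly).Monic := T.charpoly_monic
  have hdetP : ((X : ℝ[X]) • (1 : Matrix (Fin n) (Fin n) ℝ[X]) - Tc).det = T.charpoly := by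
    rw [Matrix.charpoly, hchar]
  have htrans : ((X : ℝ[X]) • (1 : Matrix (Fin n) (Fin n) ℝ[X]) + Tc).det = T.charpoly := by
    rw [← hdetP, ← Matrix.det_transpose ((X : ℝ[X]) • 1 + Tc)]
    congr 1
    rw [Matrix.transpose_add, Matrix.transpose_smul, Matrix.transpose_one]
    congr 1
    ext i j
    have := congrFun (congrFun hT j) i
    simp [hTc, Matrix.transpose_apply] at this ⊢
    simp [this]
  have hTc2 : Tc * Tc = (C (-c)) • (1 : Matrix (Fin n) (Fin n) ℝ[X]) := by
    rw [hTc, ← Matrix.map_mul, hT2]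
    ext i j
    by_cases h : i = j <;> simp [h, Matrix.one_apply]
  have hprod : ((X : ℝ[X]) • (1 : Matrix (Fin n) (Fin n) ℝ[X]) - Tc) *
      ((X : ℝ[X]) • (1 : Matrix (Fin n) (Fin n) ℝ[X]) + Tc)
      = ((X : ℝ[X]) ^ 2 + C c) • 1 := by
    have e1 : ((X : ℝ[X]) • (1 : Matrix (Fin n) (Fin n) ℝ[X]) - Tc) *
        ((X : ℝ[X]) • (1 : Matrix (Fin n) (Fin n) ℝ[X]) + Tc)
        = ((X : ℝ[X]) * X) • (1 : Matrix (Fin n) (Fin n) ℝ[X]) - Tc * Tc := by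
      simp only [sub_mul, mul_add, Matrix.smul_mul, Matrix.mul_smul, one_mul, mul_one,
        smul_smul]
      abel
    rw [e1, hTc2, map_neg, neg_smul, sub_neg_eq_add, ← add_smul, ← sq]
  have hPP : T.charpoly * T.charpoly = ((X : ℝ[X]) ^ 2 + C c) ^ n := by
    calc T.charpoly * T.charpoly
        = ((X : ℝ[X]) • (1 : Matrix (Fin n) (Fin n) ℝ[X]) - Tc).det *
          ((X : ℝ[X]) • (1 : Matrix (Fin n) (Fin n) ℝ[X]) + Tc).det := by rw [hdetP, htrans]
      _ = ((X : ℝ[X]) ^ 2 + C c) ^ n := by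
          rw [← Matrix.det_mul, hprod, Matrix.det_smul, Matrix.det_one, mul_one, Fintype.card_fin]
  have hQmon : (((X : ℝ[X]) ^ 2 + C c) ^ m).Monic :=
    (Polynomial.monic_X_pow_add_C c two_ne_zero).pow m
  have hPQ : T.charpoly = ((X : ℝ[X]) ^ 2 + C c) ^ m := by
    have h2 : T.charpoly * T.charpoly
        = (((X : ℝ[X]) ^ 2 + C c) ^ m) * (((X : ℝ[X]) ^ 2 + C c) ^ m) := by
      rw [hPP, ← pow_add, hn]; ring_nf
    rcases mul_self_eq_mul_self_iff.mp h2 with h | h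
    · exact h
    · exfalso
      have h1 := hPmon.leadingCoeff
      rw [h, Polynomial.leadingCoeff_neg, hQmon.leadingCoeff] at h1
      norm_num at h1
  have heval : (a • (1 : Matrix (Fin n) (Fin n) ℝ) - T).det = (T.charpoly).eval a := by
    rw [← hdetP, ← Polynomial.coe_evalRingHom, RingHom.map_det]
    congr 1
    ext i j
    by_cases h : i = j <;> simp [h, Matrix.one_apply, hTc]
  rw [heval, hPQ]
  simp

private lemma zSz_eq_zero' {n : ℕ} (z : Fin n → ℝ) (S : Matrix (Fin n) (Fin n) ℝ)
    (hskew : Sᵀ = -S) : ∑ i, ∑ j, z i * S i j * z j = 0 := by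
  have hsk : ∀ i j, S i j = - S j i := fun i j => by
    have := congrFun (congrFun hskew j) i
    simpa [Matrix.transpose_apply] using this
  have h2 : (∑ i, ∑ j, z i * S i j * z j) + (∑ i, ∑ j, z i * S i j * z j) = 0 := by
    nth_rewrite 1 [Finset.sum_comm]
    rw [← Finset.sum_add_distrib]
    apply Finset.sum_eq_zero
    intro x _
    rw [← Finset.sum_add_distrib]
    apply Finset.sum_eq_zero
    intro y _
    rw [hsk y x]
    ring
  linarith

/-- The determinant of the mixed Hessian block matrix arising in the
Fourier integral operator analysis equals `2^{n+1} |z|² σ^{n-1} (τ/sin τ)^{n+2}`. -/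
theorem mixed_hessian_determinant (m : ℕ) (hm : 1 ≤ m) (n : ℕ) (hn : n = 2 * m)
    (σ τ : ℝ) (hσ : 0 < σ) (hτ : 0 < τ) (hτπ : τ < Real.pi)
    (z : Fin n → ℝ)
    (S : Matrix (Fin n) (Fin n) ℝ) (hskew : Sᵀ = -S)
    (hS2 : S * S = (-((σ * τ) ^ 2)) • (1 : Matrix (Fin n) (Fin n) ℝ))
    (g : ℝ → ℝ) (hg : ∀ t, g t = t * (Real.cos t / Real.sin t)) :
    (Matrix.fromBlocks
        ((2 * σ * g τ) • (1 : Matrix (Fin n) (Fin n) ℝ) - (2 : ℝ) • S)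
        (Matrix.of fun i (_ : Fin 1) => 2 * (τ * deriv g τ - g τ) * z i)
        (Matrix.of fun (_ : Fin 1) j => 2 * (g τ - τ * deriv g τ) * z j)
        (Matrix.of fun (_ : Fin 1) (_ : Fin 1) =>
          -(z ⬝ᵥ z) * σ⁻¹ * τ ^ 2 * deriv (deriv g) τ)).det
      = 2 ^ (n + 1) * (z ⬝ᵥ z) * σ ^ (n - 1) * (τ / Real.sin τ) ^ (n + 2) := by
  have hgfun : g = fun t => t * (Real.cos t / Real.sin t) := funext hg
  set s := Real.sin τ with hsdef
  have hs : 0 < s := Real.sin_pos_of_pos_of_lt_pi hτ hτπ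
  have hs0 : s ≠ 0 := ne_of_gt hs
  have hσ0 : σ ≠ 0 := ne_of_gt hσ
  have hτ0 : τ ≠ 0 := ne_of_gt hτ
  have hgτ : g τ = τ * (Real.cos τ / s) := hg τ
  have hd1 : deriv g τ = Real.cos τ / s - τ / s ^ 2 := by
    rw [hgfun]; exact deriv_g_eq' hs0
  have hd2 : deriv (deriv g) τ = -2 / s ^ 2 + 2 * τ * Real.cos τ / s ^ 3 := by
    rw [hgfun]; exact deriv2_g_eq' hτ hτπ
  have hcs : Real.cos τ ^ 2 = 1 - s ^ 2 := by
    have := Real.sin_sq_add_cos_sq τ; rw [← hsdef] at this; linarith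
  set k : ℝ := 4 * σ ^ 2 * τ ^ 2 / s ^ 2 with hkdef
  have hk0 : k ≠ 0 := by
    rw [hkdef]; positivity
  have hkA : (2 * σ * g τ) ^ 2 + 4 * σ ^ 2 * τ ^ 2 = k := by
    rw [hgτ, hkdef]; field_simp; nlinarith [hcs]
  set A : Matrix (Fin n) (Fin n) ℝ :=
    (2 * σ * g τ) • (1 : Matrix (Fin n) (Fin n) ℝ) - (2 : ℝ) • S with hAdef
  set A' : Matrix (Fin n) (Fin n) ℝ :=
    (2 * σ * g τ) • (1 : Matrix (Fin n) (Fin n) ℝ) + (2 : ℝ) • S with hA'def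
  have hT : ((2 : ℝ) • S)ᵀ = -((2 : ℝ) • S) := by
    rw [Matrix.transpose_smul, hskew, smul_neg]
  have hT2 : ((2 : ℝ) • S) * ((2 : ℝ) • S)
      = (-(4 * σ ^ 2 * τ ^ 2)) • (1 : Matrix (Fin n) (Fin n) ℝ) := by
    rw [Matrix.smul_mul, Matrix.mul_smul, smul_smul, hS2, smul_smul]
    congr 1; ring
  have hdetA : A.det = k ^ m := by
    rw [hAdef, det_skew_shift' hn ((2:ℝ) • S) hT (4 * σ ^ 2 * τ ^ 2) hT2 (2 * σ * g τ), hkA]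
  have hAA' : A * A' = k • (1 : Matrix (Fin n) (Fin n) ℝ) := by
    rw [hAdef, hA'def]
    have e1 : ((2 * σ * g τ) • (1 : Matrix (Fin n) (Fin n) ℝ) - (2:ℝ) • S) *
        ((2 * σ * g τ) • (1 : Matrix (Fin n) (Fin n) ℝ) + (2:ℝ) • S)
        = ((2 * σ * g τ) * (2 * σ * g τ)) • (1 : Matrix (Fin n) (Fin n) ℝ)
          - ((2:ℝ) • S) * ((2:ℝ) • S) := by
      simp only [sub_mul, mul_add, Matrix.smul_mul, Matrix.mul_smul, one_mul, mul_one,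
        smul_smul]
      module
    rw [e1, hT2, neg_smul, sub_neg_eq_add, ← add_smul]
    congr 1
    rw [← hkA]; ring
  set B : Matrix (Fin n) (Fin n) ℝ := k⁻¹ • A' with hBdef
  have hAB : A * B = 1 := by
    rw [hBdef, Matrix.mul_smul, hAA', smul_smul, inv_mul_cancel₀ hk0, one_smul]
  haveI : Invertible A := invertibleOfRightInverse A B hAB
  have hinv : ⅟A = B := invOf_eq_right_inv hAB
  rw [Matrix.det_fromBlocks₁₁, hinv, hdetA]
  set c1 : ℝ := 2 * (τ * deriv g τ - g τ) with hc1def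
  set c2 : ℝ := 2 * (g τ - τ * deriv g τ) with hc2def
  -- compute the Schur complement entry
  have entry : ((Matrix.of fun (_ : Fin 1) j => c2 * z j) * B *
      (Matrix.of fun i (_ : Fin 1) => c1 * z i)) 0 0
      = ∑ j, ∑ i, (c2 * z i) *
          (k⁻¹ * (2 * σ * g τ * (if i = j then (1:ℝ) else 0) + 2 * S i j)) * (c1 * z j) := by
    rw [Matrix.mul_apply]
    apply Finset.sum_congr rfl
    intro j _
    rw [Matrix.mul_apply, Finset.sum_mul]
    apply Finset.sum_congr rfl
    intro i _
    rw [hBdef, hA'def]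
    simp only [Matrix.of_apply, Matrix.smul_apply, Matrix.add_apply, Matrix.one_apply,
      smul_eq_mul]
  have entry2 : ∑ j, ∑ i, (c2 * z i) *
      (k⁻¹ * (2 * σ * g τ * (if i = j then (1:ℝ) else 0) + 2 * S i j)) * (c1 * z j)
      = c2 * c1 * k⁻¹ * (2 * σ * g τ) * (z ⬝ᵥ z) := by
    have hsplit : ∀ j, (∑ i, (c2 * z i) *
        (k⁻¹ * (2 * σ * g τ * (if i = j then (1:ℝ) else 0) + 2 * S i j)) * (c1 * z j))
        = c2 * c1 * k⁻¹ * (2 * σ * g τ) * (z j * z j)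
          + ∑ i, c2 * c1 * k⁻¹ * 2 * (z i * S i j * z j) := by
      intro j
      have hterm : ∀ i, (c2 * z i) *
          (k⁻¹ * (2 * σ * g τ * (if i = j then (1:ℝ) else 0) + 2 * S i j)) * (c1 * z j)
          = (if i = j then c2 * c1 * k⁻¹ * (2 * σ * g τ) * (z j * z j) else 0)
            + c2 * c1 * k⁻¹ * 2 * (z i * S i j * z j) := by
        intro i
        by_cases h : i = j
        · subst h; rw [if_pos rfl, if_pos rfl]; ring
        · rw [if_neg h, if_neg h]; ring
      rw [Finset.sum_congr rfl (fun i _ => hterm i), Finset.sum_add_distrib,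
        Finset.sum_ite_eq' Finset.univ j
          (fun _ => c2 * c1 * k⁻¹ * (2 * σ * g τ) * (z j * z j))]
      simp
    rw [Finset.sum_congr rfl (fun j _ => hsplit j), Finset.sum_add_distrib]
    have hz : ∑ j, ∑ i, c2 * c1 * k⁻¹ * 2 * (z i * S i j * z j) = 0 := by
      have : ∑ j, ∑ i, c2 * c1 * k⁻¹ * 2 * (z i * S i j * z j)
          = c2 * c1 * k⁻¹ * 2 * ∑ i, ∑ j, z i * S i j * z j := by
        rw [Finset.mul_sum, Finset.sum_comm]
        exact Finset.sum_congr rfl fun j _ => by rw [Finset.mul_sum]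
      rw [this, zSz_eq_zero' z S hskew, mul_zero]
    rw [hz, add_zero, dotProduct, Finset.mul_sum]
  -- now the 1×1 determinant
  rw [Matrix.det_fin_one]
  rw [Matrix.sub_apply, entry, entry2]
  rw [Matrix.of_apply]
  -- substitute all scalar values and finish
  rw [hc1def, hc2def, hd1, hd2, hgτ, hkdef]
  have hτs : τ * deriv g τ - g τ = -(τ^2/s^2) := by
    rw [hd1, hgτ]; field_simp; ring
  set Z : ℝ := z ⬝ᵥ z with hZdef
  have hnn : n = 2 * m := hn
  have hpow : (4 * σ ^ 2 * τ ^ 2 / s ^ 2) ^ m = (2 * σ * (τ / s)) ^ n := by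
    rw [hnn, pow_mul]
    congr 1
    field_simp; ring
  rw [hpow]
  have hσn : σ ^ n = σ ^ (n - 1) * σ := by
    have h1 : n - 1 + 1 = n := by omega
    rw [← pow_succ, h1]
  have hexp : (2 * σ * (τ / s)) ^ n = 2 ^ n * (σ ^ (n-1) * σ) * (τ / s) ^ n := by
    rw [mul_pow, mul_pow, ← hσn]
  rw [hexp]
  have hfinal : (τ / s) ^ (n + 2) = (τ / s) ^ n * (τ/s)^2 := by
    rw [pow_add]
  rw [hfinal]
  have h2n : (2:ℝ) ^ (n+1) = 2^n * 2 := by rw [pow_succ]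
  rw [h2n]
  field_simp
  ring
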